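/- Lemma 2.13: Let θ be a fully invariant congruence on F = FreeMonoid ℕ with (x^n, x^{n+1}) ∈ θ for some n ≥ 2. Suppose θ ⊆ θ_{C_2}, where θ_{C_2} = θ({x² ≈ x³, xy ≈ yx}) (i.e. the variety C_2 is contained in the variety V corresponding to θ), and suppose there exists (u,v) ∈ θ with (u,v) ∉ θ_E, where θ_E = θ({x² ≈ x³, x²y² ≈ y²x², xtx ≈ x²t}) (i.e. the variety E is not contained in V). Then (x^n y x^n, y x^n) ∈ θ, i.e. V satisfies the identity x^n y x^n ≈ y x^n. -/

import Mathlib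

/-! Common definitions: words, fully invariant congruences, identities and
named varieties from the paper. -/

/-- The free monoid over the countably infinite alphabet `ℕ`. -/
abbrev FM : Type := FreeMonoid ℕ

/-- The letters `x, y, z, s, t, h` (pairwise distinct elements of `ℕ`). -/
def xL : FM := FreeMonoid.of 0
def yL : FM := FreeMonoid.of 1
def zL : FM := FreeMonoid.of 2
def sL : FM := FreeMonoid.of 3
def tL : FM := FreeMonoid.of 4
def hL : FM := FreeMonoid.of 5
/-- The indexed letters `z_i` and `t_i` (0-based; pairwise distinct, and distinct
from the named letters above). -/
def zV (i : ℕ) : FM := FreeMonoid.of (10 + 2 * i)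
def tV (i : ℕ) : FM := FreeMonoid.of (11 + 2 * i)

/-- A congruence on the free monoid is fully invariant if it is stable under all
monoid endomorphisms. -/
def IsFullyInvariant (θ : Con FM) : Prop :=
  ∀ (σ : FM →* FM) (u v : FM), θ u v → θ (σ u) (σ v)

/-- The smallest fully invariant congruence on `FM` containing a set of identities. -/
def fiCon (E : Set (FM × FM)) : Con FM :=
  sInf {c : Con FM | IsFullyInvariant c ∧ ∀ p ∈ E, c p.1 p.2}

/-- Two congruences (relations) permute: `α ∘ β = β ∘ α`. -/
def Permute (α β : Con FM) : Prop :=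
  Relation.Comp (⇑α) (⇑β) = Relation.Comp (⇑β) (⇑α)

/-- A monoid `M` satisfies the identity `p.1 ≈ p.2`. -/
def MSatisfies (M : Type*) [Monoid M] (p : FM × FM) : Prop :=
  ∀ φ : FM →* M, φ p.1 = φ p.2

/-- A monoid `M` satisfies all identities of a congruence `θ`. -/
def SatisfiesAll (θ : Con FM) (M : Type*) [Monoid M] : Prop :=
  ∀ u v : FM, θ u v → MSatisfies M (u, v)

/-- Every element of the monoid `M` has a two-sided inverse, i.e. `M` is a group. -/
def IsGroupMonoid (M : Type*) [Monoid M] : Prop :=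
  ∀ m : M, ∃ m' : M, m * m' = 1 ∧ m' * m = 1

/-- The dual of a congruence: `θ^δ = {(rev u, rev v) : (u, v) ∈ θ}`. -/
def dualCon (θ : Con FM) : Con FM where
  r a b := θ a.reverse b.reverse
  iseqv := ⟨fun _ => θ.refl _, fun h => θ.symm h, fun h h' => θ.trans h h'⟩
  mul' := fun {a b c d} h₁ h₂ => by
    show θ (a * c).reverse (b * d).reverse
    rw [FreeMonoid.reverse_mul, FreeMonoid.reverse_mul]
    exact θ.mul h₂ h₁

/-- σ1 : `xysxty ≈ yxsxty`. -/
def idσ1 : FM × FM := (xL*yL*sL*xL*tL*yL, yL*xL*sL*xL*tL*yL)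
/-- σ2 : `xsytxy ≈ xsytyx`. -/
def idσ2 : FM × FM := (xL*sL*yL*tL*xL*yL, xL*sL*yL*tL*yL*xL)
/-- σ3 : `xsxyty ≈ xsyxty`. -/
def idσ3 : FM × FM := (xL*sL*xL*yL*tL*yL, xL*sL*yL*xL*tL*yL)
/-- α1 : `xysxtxhy ≈ yxsxtxhy`. -/
def idα1 : FM × FM := (xL*yL*sL*xL*tL*xL*hL*yL, yL*xL*sL*xL*tL*xL*hL*yL)
/-- α2 : `xysxtyhx ≈ yxsxtyhx`. -/
def idα2 : FM × FM := (xL*yL*sL*xL*tL*yL*hL*xL, yL*xL*sL*xL*tL*yL*hL*xL)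
/-- α3 : `xysytxhx ≈ yxsytxhx`. -/
def idα3 : FM × FM := (xL*yL*sL*yL*tL*xL*hL*xL, yL*xL*sL*yL*tL*xL*hL*xL)

/-- `aIdent i` is the identity `α_i` for `i ∈ {1, 2, 3}`. -/
def aIdent (i : ℕ) : FM × FM := if i = 1 then idα1 else if i = 2 then idα2 else idα3
/-- `bIdent i` is `β_i`, obtained from `α_i` by reversing both sides. -/
def bIdent (i : ℕ) : FM × FM := ((aIdent i).1.reverse, (aIdent i).2.reverse)

/-- The ordered product `f 0 * f 1 * ⋯ * f (n-1)`. -/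
def prodRange (n : ℕ) (f : ℕ → FM) : FM := ((List.range n).map f).prod
/-- The ordered product `f 0 * f 1 * ⋯ * f (n-1)` over `Fin n`. -/
def prodFin (n : ℕ) (f : Fin n → FM) : FM := ((List.finRange n).map f).prod

/-- The word `w_n[π,τ]` (0-based indices). -/
def wWord (n : ℕ) (π τ : Equiv.Perm (Fin n)) : FM :=
  prodRange n (fun i => zV i * tV i) * xL *
    prodFin n (fun i => zV (π i) * zV (n + τ i)) * xL *
    prodRange n (fun i => tV (n + i) * zV (n + i))

/-- The word `w_n'[π,τ]`. -/
def wWord' (n : ℕ) (π τ : Equiv.Perm (Fin n)) : FM :=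
  prodRange n (fun i => zV i * tV i) * (xL * xL) *
    prodFin n (fun i => zV (π i) * zV (n + τ i)) *
    prodRange n (fun i => tV (n + i) * zV (n + i))

/-- The word `c_{n,m}[ρ]`. -/
def cWord (n m : ℕ) (ρ : Equiv.Perm (Fin (n + m))) : FM :=
  prodRange n (fun i => zV i * tV i) * (xL * yL) * tL *
    prodRange m (fun i => zV (n + i) * tV (n + i)) * xL *
    prodFin (n + m) (fun i => zV (ρ i)) * yL

/-- The word `c'_{n,m}[ρ]`. -/
def cWord' (n m : ℕ) (ρ : Equiv.Perm (Fin (n + m))) : FM :=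
  prodRange n (fun i => zV i * tV i) * (yL * xL) * tL *
    prodRange m (fun i => zV (n + i) * tV (n + i)) * xL *
    prodFin (n + m) (fun i => zV (ρ i)) * yL

/-- The word `c_{n,m,k}[ρ]`. -/
def cWord3 (n m k : ℕ) (ρ : Equiv.Perm (Fin (n + m + k))) : FM :=
  prodRange n (fun i => zV i * tV i) * (xL * yL) * tL *
    prodRange m (fun i => zV (n + i) * tV (n + i)) * xL *
    prodFin (n + m + k) (fun i => zV (ρ i)) * yL *
    prodRange k (fun i => tV (n + m + i) * zV (n + m + i))

/-- The word `c'_{n,m,k}[ρ]`. -/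
def cWord3' (n m k : ℕ) (ρ : Equiv.Perm (Fin (n + m + k))) : FM :=
  prodRange n (fun i => zV i * tV i) * (yL * xL) * tL *
    prodRange m (fun i => zV (n + i) * tV (n + i)) * xL *
    prodFin (n + m + k) (fun i => zV (ρ i)) * yL *
    prodRange k (fun i => tV (n + m + i) * zV (n + m + i))

/-- The equational theory of `D_∞`. -/
def θDinf : Con FM :=
  fiCon {(xL^2, xL^3), (xL^2 * yL, yL * xL^2), idσ1, idσ2, idσ3}
/-- The equational theory of `N`. -/
def θN : Con FM :=
  fiCon {(xL^2, xL^3), (xL^2 * yL, yL * xL^2), (xL*yL*xL*zL*xL, xL^2*yL*zL), idσ2, idσ3}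
/-- The equational theory of `K`. -/
def θK : Con FM :=
  fiCon {(xL^2*yL, xL^2*yL*xL), (xL*yL*xL, xL*yL*xL^2), (xL^2*yL^2, yL^2*xL^2)}
/-- The identity basis of `P_n`. -/
def basisP (n : ℕ) : Set (FM × FM) :=
  {(xL^n, xL^(n+1)), (xL^n * yL, yL * xL^n), (xL^2*yL, xL*yL*xL)}
/-- The equational theory of `P_n`. -/
def θP (n : ℕ) : Con FM := fiCon (basisP n)
/-- The equational theory of `R`. -/
def θR : Con FM :=
  fiCon ({(xL^2, xL^3), (xL^2*yL, yL*xL^2), idσ1, idσ2} ∪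
    {p : FM × FM | ∃ (n : ℕ) (π τ : Equiv.Perm (Fin n)),
        1 ≤ n ∧ p = (wWord n π τ, wWord' n π τ)})
/-- The equational theory of `Q_{r,s}`. -/
def θQ (r s : ℕ) : Con FM :=
  fiCon ({(xL^2, xL^3), (xL^2*yL, yL*xL^2), idσ3} ∪
    {p : FM × FM | ∃ i : ℕ, (i = 1 ∨ i = 2 ∨ i = 3) ∧ i ≠ r ∧ p = aIdent i} ∪
    {p : FM × FM | ∃ j : ℕ, (j = 1 ∨ j = 2 ∨ j = 3) ∧ j ≠ s ∧ p = bIdent j} ∪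
    {p : FM × FM | ∃ (n m : ℕ) (ρ : Equiv.Perm (Fin (n + m))),
        p = (cWord n m ρ, cWord' n m ρ) ∨
        p = ((cWord n m ρ).reverse, (cWord' n m ρ).reverse)})
/-- The equational theory of the variety `SL` of semilattice monoids. -/
def θSL : Con FM := fiCon {(xL, xL^2), (xL*yL, yL*xL)}

/-- `u` is a factor (contiguous subword) of `w`. -/
def IsFactor (u w : FM) : Prop := ∃ p q : FM, p * u * q = w

lemma isFactor_left {a b w : FM} (h : IsFactor (a * b) w) : IsFactor a w := by
  obtain ⟨p, q, hpq⟩ := h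
  exact ⟨p, b * q, by rw [← hpq]; simp [mul_assoc]⟩

lemma isFactor_right {a b w : FM} (h : IsFactor (a * b) w) : IsFactor b w := by
  obtain ⟨p, q, hpq⟩ := h
  exact ⟨p * a, q, by rw [← hpq]; simp [mul_assoc]⟩

/-- The Rees congruence associated with the ideal of non-factors of `w`. -/
def reesCon (w : FM) : Con FM where
  r u v := u = v ∨ (¬ IsFactor u w ∧ ¬ IsFactor v w)
  iseqv := by
    refine ⟨fun _ => Or.inl rfl, ?_, ?_⟩
    · intro a b h
      rcases h with rfl | ⟨h1, h2⟩
      · exact Or.inl rfl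
      · exact Or.inr ⟨h2, h1⟩
    · intro a b c h h'
      rcases h with rfl | ⟨h1, h2⟩
      · exact h'
      · rcases h' with rfl | ⟨h3, h4⟩
        · exact Or.inr ⟨h1, h2⟩
        · exact Or.inr ⟨h1, h4⟩
  mul' := by
    rintro a b c d (rfl | ⟨h1, h2⟩) (rfl | ⟨h3, h4⟩)
    · exact Or.inl rfl
    · exact Or.inr ⟨fun h => h3 (isFactor_right h), fun h => h4 (isFactor_right h)⟩
    · exact Or.inr ⟨fun h => h1 (isFactor_left h), fun h => h2 (isFactor_left h)⟩
    · exact Or.inr ⟨fun h => h1 (isFactor_left h), fun h => h2 (isFactor_left h)⟩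

/-- The Rees quotient monoid `S(w)`. -/
abbrev SMon (w : FM) : Type := (reesCon w).Quotient

/-- The number of occurrences of the letter `a` in the word `w`. -/
def occ (w : FM) (a : ℕ) : ℕ := (FreeMonoid.toList w).count a

/-- A word in which every letter occurs at most once. -/
def LinearW (w : FM) : Prop := ∀ a : ℕ, occ w a ≤ 1

/-- Assemble the word `b0 * t_1 * b_1 * ⋯ * t_m * b_m` from a first block and a list
of (simple letter, block) pairs. -/
def assemble (b0 : FM) (rest : List (ℕ × FM)) : FM :=
  b0 * (rest.map (fun p => FreeMonoid.of p.1 * p.2)).prod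

/-- `(b0, rest)` is the decomposition of `w` into alternating simple letters and blocks
consisting of multiple letters. -/
def IsDecomposition (w : FM) (b0 : FM) (rest : List (ℕ × FM)) : Prop :=
  w = assemble b0 rest ∧
  (∀ p ∈ rest, occ w p.1 = 1) ∧
  (∀ a ∈ FreeMonoid.toList b0, 2 ≤ occ w a) ∧
  (∀ p ∈ rest, ∀ a ∈ FreeMonoid.toList p.2, 2 ≤ occ w a)

/-- The identity `u ≈ v` is linear-balanced. -/
def LinearBalanced (u v : FM) : Prop :=
  ∃ (b0 c0 : FM) (urest vrest : List (ℕ × FM)),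
    IsDecomposition u b0 urest ∧ IsDecomposition v c0 vrest ∧
    urest.map Prod.fst = vrest.map Prod.fst ∧
    ∀ a : ℕ, (2 ≤ occ u a ∨ 2 ≤ occ v a) →
      occ b0 a = occ c0 a ∧ occ b0 a ≤ 1 ∧
      ∀ q ∈ urest.zip vrest, occ q.1.2 a = occ q.2.2 a ∧ occ q.1.2 a ≤ 1

/-- `w` is an isoterm for `θ`. -/
def IsIsoterm (θ : Con FM) (w : FM) : Prop := ∀ w' : FM, θ w w' → w' = w

/-- The equational theory of `C₂`. -/
def θC2 : Con FM := fiCon {(xL ^ 2, xL ^ 3), (xL * yL, yL * xL)}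
/-- The equational theory of `E`. -/
def θE : Con FM :=
  fiCon {(xL ^ 2, xL ^ 3), (xL ^ 2 * yL ^ 2, yL ^ 2 * xL ^ 2), (xL * tL * xL, xL ^ 2 * tL)}

section Lemma213Aux

open FreeMonoid

lemma fiCon_fullyInvariant (E : Set (FM × FM)) : IsFullyInvariant (fiCon E) := by
  intro σ u v h c hc
  exact hc.1 σ u v (h c hc)

lemma fiCon_of_mem {E : Set (FM × FM)} {p : FM × FM} (hp : p ∈ E) :
    fiCon E p.1 p.2 := fun c hc => hc.2 p hp

def subst (f : ℕ → FM) : FM →* FM := FreeMonoid.lift f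

lemma θE_gen1 : θE (xL ^ 2) (xL ^ 3) :=
  fiCon_of_mem (p := (xL ^ 2, xL ^ 3)) (by simp)

lemma θE_gen2 : θE (xL ^ 2 * yL ^ 2) (yL ^ 2 * xL ^ 2) :=
  fiCon_of_mem (p := (xL ^ 2 * yL ^ 2, yL ^ 2 * xL ^ 2)) (by simp)

lemma θE_gen3 : θE (xL * tL * xL) (xL ^ 2 * tL) :=
  fiCon_of_mem (p := (xL * tL * xL, xL ^ 2 * tL)) (by simp)

lemma θE_absorb (a : ℕ) (s : FM) :
    θE (of a * s * of a) (of a * of a * s) := by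
  have h : θE _ _ := (fiCon_fullyInvariant _ : IsFullyInvariant θE)
    (subst (fun i => if i = 0 then of a else if i = 4 then s else of i)) _ _ θE_gen3
  simpa [subst, xL, tL, map_mul, map_pow, pow_two, FreeMonoid.lift_eval_of] using h

lemma θE_sqcomm (a b : ℕ) :
    θE (of a * of a * (of b * of b)) (of b * of b * (of a * of a)) := by
  have h : θE _ _ := (fiCon_fullyInvariant _ : IsFullyInvariant θE)
    (subst (fun i => if i = 0 then of a else if i = 1 then of b else of i)) _ _ θE_gen2
  simpa [subst, xL, yL, map_mul, map_pow, pow_two, FreeMonoid.lift_eval_of] using h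

lemma θE_sq (a : ℕ) : θE (of a ^ 2) (of a ^ 3) := by
  have h : θE _ _ := (fiCon_fullyInvariant _ : IsFullyInvariant θE) (subst (fun _ => of a)) _ _ θE_gen1
  simpa [subst, xL, map_pow, FreeMonoid.lift_eval_of] using h

lemma θE_pow_collapse (a : ℕ) : ∀ k, θE (of a ^ (2 + k)) (of a ^ 2) := by
  intro k
  induction k with
  | zero => exact θE.refl _
  | succ k ih =>
    refine θE.trans ?_ ih
    have h2 : θE (of a ^ k * of a ^ 3) (of a ^ k * of a ^ 2) :=
      θE.mul (θE.refl _) (θE.symm (θE_sq a))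
    have e1 : of a ^ (2 + (k+1)) = of a ^ k * of a ^ 3 := by
      rw [← pow_add]; ring_nf
    have e2 : of a ^ (2 + k) = of a ^ k * of a ^ 2 := by
      rw [← pow_add]; ring_nf
    rw [e1, e2]; exact h2

def M2 : Type := {m : ℕ // m ≤ 2}

instance : Monoid M2 where
  one := ⟨0, by omega⟩
  mul a b := ⟨min (a.1 + b.1) 2, by omega⟩
  mul_assoc a b c := Subtype.ext (by
    show min (min (a.1 + b.1) 2 + c.1) 2 = min (a.1 + min (b.1 + c.1) 2) 2
    omega)
  one_mul a := Subtype.ext (by show min (0 + a.1) 2 = a.1; have := a.2; omega)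
  mul_one a := Subtype.ext (by show min (a.1 + 0) 2 = a.1; have := a.2; omega)

lemma M2.mul_val (a b : M2) : (a * b).1 = min (a.1 + b.1) 2 := rfl
lemma M2.one_val : (1 : M2).1 = 0 := rfl

lemma M2.pow_val (m : M2) : ∀ k, (m ^ k).1 = min (k * m.1) 2 := by
  intro k
  induction k with
  | zero => simp [M2.one_val]
  | succ k ih =>
    rw [pow_succ, M2.mul_val, ih, Nat.succ_mul]
    omega

def KM2 : Con FM where
  r u v := ∀ ψ : FM →* M2, ψ u = ψ v
  iseqv := ⟨fun _ _ => rfl, fun h ψ => (h ψ).symm, fun h h' ψ => (h ψ).trans (h' ψ)⟩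
  mul' := fun h h' ψ => by rw [map_mul, map_mul, h ψ, h' ψ]

lemma θC2_le_KM2 : θC2 ≤ KM2 := by
  intro u v h
  refine h KM2 ⟨fun σ u v h ψ => h (ψ.comp σ), ?_⟩
  rintro p hp
  simp only [Set.mem_insert_iff, Set.mem_singleton_iff] at hp
  rcases hp with rfl | rfl
  · intro ψ
    apply Subtype.ext
    rw [map_pow, map_pow, M2.pow_val, M2.pow_val]
    omega
  · intro ψ
    apply Subtype.ext
    rw [map_mul, map_mul, M2.mul_val, M2.mul_val]
    omega

def cnt2hom (a : ℕ) : FM →* M2 :=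
  FreeMonoid.lift (fun b => if b = a then ⟨1, by omega⟩ else ⟨0, by omega⟩)

lemma cnt2hom_ofList (a : ℕ) (l : List ℕ) :
    (cnt2hom a (ofList l)).1 = min (l.count a) 2 := by
  induction l with
  | nil =>
    show (cnt2hom a 1).1 = _
    rw [map_one]; simp [M2.one_val]
  | cons b l ih =>
    rw [ofList_cons, map_mul, M2.mul_val, ih]
    have hb : cnt2hom a (of b) = if b = a then ⟨1, by omega⟩ else ⟨0, by omega⟩ :=
      FreeMonoid.lift_eval_of _ _
    by_cases h : b = a
    · subst h
      rw [hb]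
      simp [List.count_cons]
      omega
    · rw [hb]
      simp [List.count_cons, h, Ne.symm h]

lemma θC2_count {u v : FM} (h : θC2 u v) (a : ℕ) :
    min (u.toList.count a) 2 = min (v.toList.count a) 2 := by
  have hk := θC2_le_KM2 h (cnt2hom a)
  have hu := cnt2hom_ofList a u.toList
  have hv := cnt2hom_ofList a v.toList
  rw [ofList_toList] at hu hv
  rw [← hu, ← hv, hk]

end Lemma213Aux

/-! ### List utilities -/

lemma count_filter_ne (l : List ℕ) (a c : ℕ) :
    (l.filter (fun d => d != a)).count c = if c = a then 0 else l.count c := by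
  split
  · next h =>
    subst h
    refine List.count_eq_zero.mpr (fun hc => ?_)
    have := List.of_mem_filter hc
    simp at this
  · next h =>
    exact List.count_filter (by simp [h])

lemma exists_split_first {a : ℕ} {l : List ℕ} (h : a ∈ l) :
    ∃ l1 l2, l = l1 ++ a :: l2 ∧ a ∉ l1 := by
  induction l with
  | nil => cases h
  | cons b l ih =>
    by_cases hb : b = a
    · exact ⟨[], l, by simp [hb], by simp⟩
    · have h' : a ∈ l := by
        rcases List.mem_cons.mp h with rfl | h'
        · exact absurd rfl hb
        · exact h'
      obtain ⟨l1, l2, rfl, hn⟩ := ih h'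
      exact ⟨b :: l1, l2, rfl, by
        simp only [List.mem_cons, not_or]
        exact ⟨fun h => hb h.symm, hn⟩⟩

lemma length_filter_ne_lt {a : ℕ} {l : List ℕ} (h : a ∈ l) :
    (l.filter (fun d => d != a)).length < l.length := by
  induction l with
  | nil => cases h
  | cons b l ih =>
    rw [List.filter_cons]
    by_cases hb : b = a
    · subst hb
      simp only [bne_self_eq_false, if_neg]
      · exact Nat.lt_succ_of_le (List.length_filter_le _ _)
    · have h' : a ∈ l := by
        rcases List.mem_cons.mp h with rfl | h'
        · exact absurd rfl hb
        · exact h'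
      have hbb : (b != a) = true := by simp [hb]
      rw [if_pos hbb]
      simpa using ih h'

lemma takeWhile_filter_comm (p : ℕ → Bool) (c : ℕ) (hc : p c = true) :
    ∀ l : List ℕ,
      (l.filter p).takeWhile (fun d => d != c)
        = (l.takeWhile (fun d => d != c)).filter p := by
  intro l
  induction l with
  | nil => rfl
  | cons x xs ih =>
    rw [List.filter_cons, List.takeWhile_cons]
    by_cases hxc : x = c
    · subst hxc
      rw [if_pos hc]
      simp [List.takeWhile_cons]
    · have hxc' : (x != c) = true := by simp [hxc]
      by_cases hx : p x = true
      · rw [if_pos hx, List.takeWhile_cons, if_pos hxc', if_pos hxc', List.filter_cons,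
          if_pos hx, ih]
      · rw [if_neg hx, if_pos hxc', List.filter_cons, if_neg hx, ih]

/-! ### The relation θE on lists -/

abbrev RE (l m : List ℕ) : Prop := θE (FreeMonoid.ofList l) (FreeMonoid.ofList m)

lemma RE_cons (a : ℕ) {l m : List ℕ} (h : RE l m) : RE (a :: l) (a :: m) := by
  unfold RE
  rw [FreeMonoid.ofList_cons, FreeMonoid.ofList_cons]
  exact θE.mul (θE.refl _) h

lemma ofList_replicate (a : ℕ) : ∀ k,
    FreeMonoid.ofList (List.replicate k a) = FreeMonoid.of a ^ k := by
  intro k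
  induction k with
  | zero => simp
  | succ k ih => rw [List.replicate_succ, FreeMonoid.ofList_cons, ih, pow_succ']

lemma gather (N : ℕ) : ∀ (l : List ℕ) (a : ℕ), l.length ≤ N →
    RE (a :: l) (List.replicate (l.count a + 1) a ++ l.filter (fun d => d != a)) := by
  induction N with
  | zero =>
    intro l a h
    have : l = [] := List.eq_nil_of_length_eq_zero (Nat.le_zero.mp h)
    subst this
    exact θE.refl _
  | succ N ih =>
    intro l a hlen
    by_cases ha : a ∈ l
    · obtain ⟨l1, l2, rfl, hnl1⟩ := exists_split_first ha
      have s1 : RE (a :: (l1 ++ a :: l2)) (a :: a :: (l1 ++ l2)) := by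
        unfold RE
        simpa [FreeMonoid.ofList_cons, FreeMonoid.ofList_append, mul_assoc] using
          θE.mul (θE_absorb a (FreeMonoid.ofList l1)) (θE.refl (FreeMonoid.ofList l2))
      have hlen2 : (l1 ++ l2).length ≤ N := by
        simp only [List.length_append, List.length_cons] at hlen ⊢
        omega
      have s2 := ih (l1 ++ l2) a hlen2
      have s3 : RE (a :: a :: (l1 ++ l2))
          (a :: (List.replicate ((l1 ++ l2).count a + 1) a
            ++ (l1 ++ l2).filter (fun d => d != a))) := RE_cons a s2
      refine θE.trans (θE.trans s1 s3) ?_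
      have hc : (l1 ++ a :: l2).count a = (l1 ++ l2).count a + 1 := by
        simp [List.count_append, List.count_cons]
        omega
      have hf : (l1 ++ a :: l2).filter (fun d => d != a)
          = (l1 ++ l2).filter (fun d => d != a) := by
        simp [List.filter_append, List.filter_cons]
      rw [hc, hf, List.replicate_succ (a := a) (n := (l1 ++ l2).count a + 1), List.cons_append]
      exact θE.refl _
    · have h0 : l.count a = 0 := List.count_eq_zero.mpr ha
      have hf : l.filter (fun d => d != a) = l :=
        List.filter_eq_self.mpr (fun b hb => by
          simp only [bne_iff_ne, ne_eq]
          rintro rfl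
          exact ha hb)
      rw [h0, hf, List.replicate_one, List.singleton_append]
      exact θE.refl _

lemma gather2 {l : List ℕ} {a : ℕ} (ha : a ∈ l) :
    RE (a :: l) (a :: a :: l.filter (fun d => d != a)) := by
  have h1 := gather l.length l a le_rfl
  refine θE.trans h1 ?_
  have hc : 1 ≤ l.count a := List.count_pos_iff.mpr ha
  show θE _ _
  rw [FreeMonoid.ofList_append, ofList_replicate]
  have hp : θE (FreeMonoid.of a ^ (l.count a + 1)) (FreeMonoid.of a ^ 2) := by
    have h2 := θE_pow_collapse a (l.count a - 1)
    rw [show 2 + (l.count a - 1) = l.count a + 1 by omega] at h2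
    exact h2
  have h2 := θE.mul hp (θE.refl (FreeMonoid.ofList (l.filter (fun d => d != a))))
  refine θE.trans h2 ?_
  have he : FreeMonoid.of a ^ 2 * FreeMonoid.ofList (l.filter (fun d => d != a))
      = FreeMonoid.ofList (a :: a :: l.filter (fun d => d != a)) := by
    simp [pow_two, FreeMonoid.ofList_cons, mul_assoc]
  rw [he]
  exact θE.refl _

lemma bubble (N : ℕ) : ∀ (l : List ℕ) (b : ℕ), l.length ≤ N → 2 ≤ l.count b →
    (∀ c ∈ l.takeWhile (fun d => d != b), l.count c ≠ 1) →
    RE l (b :: b :: l.filter (fun d => d != b)) := by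
  induction N with
  | zero =>
    intro l b hlen hcb _
    have : l = [] := List.eq_nil_of_length_eq_zero (Nat.le_zero.mp hlen)
    subst this
    simp at hcb
  | succ N ih =>
    intro l b hlen hcb hns
    match l, hlen, hcb, hns with
    | [], _, hcb, _ => simp at hcb
    | a :: l', hlen, hcb, hns =>
      by_cases hab : a = b
      · subst hab
        have hmem : a ∈ l' := by
          have : (a :: l').count a = l'.count a + 1 := by simp [List.count_cons]
          rw [this] at hcb
          exact List.count_pos_iff.mp (by omega)
        have hfe : (a :: l').filter (fun d => d != a) = l'.filter (fun d => d != a) := by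
          simp [List.filter_cons]
        rw [hfe]
        exact gather2 hmem
      · have hane : (a != b) = true := by simp [hab]
        have hcb' : l'.count b = (a :: l').count b := by
          simp [List.count_cons, Ne.symm hab, hab]
        have hb' : b ∈ l' := List.count_pos_iff.mp (by omega)
        have htw : (a :: l').takeWhile (fun d => d != b)
            = a :: l'.takeWhile (fun d => d != b) := by
          rw [List.takeWhile_cons, if_pos hane]
        have hca : (a :: l').count a ≠ 1 := by
          refine hns a ?_
          rw [htw]; exact List.mem_cons_self
        have haa : a ∈ l' := by
          have hc1 : (a :: l').count a = l'.count a + 1 := by simp [List.count_cons]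
          exact List.count_pos_iff.mp (by omega)
        have hg : RE (a :: l') (a :: a :: l'.filter (fun d => d != a)) := gather2 haa
        set w := l'.filter (fun d => d != a) with hw
        have hwb : w.count b = l'.count b := by
          rw [hw, count_filter_ne, if_neg (Ne.symm hab)]
        have hwlen : w.length ≤ N := by
          have h1 : w.length ≤ l'.length := List.length_filter_le _ _
          have h2 : l'.length + 1 ≤ N + 1 := by simpa using hlen
          omega
        have hbna : (b != a) = true := by simp [Ne.symm hab]
        have hwns : ∀ c ∈ w.takeWhile (fun d => d != b), w.count c ≠ 1 := by
          intro c hcw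
          rw [hw, takeWhile_filter_comm _ b hbna l'] at hcw
          have hc1 : c ∈ l'.takeWhile (fun d => d != b) := (List.mem_filter.mp hcw).1
          have hc2 : (c != a) = true := (List.mem_filter.mp hcw).2
          have hc2' : c ≠ a := by simpa using hc2
          have hnsc : (a :: l').count c ≠ 1 := by
            refine hns c ?_
            rw [htw]; exact List.mem_cons_of_mem _ hc1
          have hac : ¬ a = c := fun h => hc2' h.symm
          have hcc : (a :: l').count c = l'.count c := by
            simp [List.count_cons, hac]
          rw [hw, count_filter_ne, if_neg hc2']
          omega
        have hwcb : 2 ≤ w.count b := by omega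
        have hrec := ih w b hwlen hwcb hwns
        set w' := w.filter (fun d => d != b) with hw'
        have step2 : RE (a :: a :: w) (a :: a :: b :: b :: w') :=
          RE_cons a (RE_cons a hrec)
        have step3 : RE (a :: a :: b :: b :: w') (b :: b :: a :: a :: w') := by
          unfold RE
          simp only [FreeMonoid.ofList_cons]
          simpa [mul_assoc] using
            θE.mul (θE_sqcomm a b) (θE.refl (FreeMonoid.ofList w'))
        have hfl : (a :: l').filter (fun d => d != b)
            = a :: l'.filter (fun d => d != b) := by
          rw [List.filter_cons, if_pos hane]
        have haf : a ∈ l'.filter (fun d => d != b) :=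
          List.mem_filter.mpr ⟨haa, hane⟩
        have hg2 : RE (a :: l'.filter (fun d => d != b))
            (a :: a :: (l'.filter (fun d => d != b)).filter (fun d => d != a)) :=
          gather2 haf
        have hcomm : (l'.filter (fun d => d != b)).filter (fun d => d != a) = w' := by
          rw [hw', hw, List.filter_filter, List.filter_filter]
          exact List.filter_congr (fun x _ => Bool.and_comm _ _)
        rw [hcomm] at hg2
        have step4 : RE (b :: b :: a :: a :: w')
            (b :: b :: (a :: l').filter (fun d => d != b)) := by
          rw [hfl]
          exact RE_cons b (RE_cons b (θE.symm hg2))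
        exact θE.trans hg (θE.trans step2 (θE.trans step3 step4))

/-! ### Invariant data of a word -/

def sp (l : List ℕ) (c : ℕ) : Bool := l.count c == 1

def SS (l : List ℕ) : List ℕ := l.filter (sp l)

def sB (l : List ℕ) (c : ℕ) : List ℕ :=
  (l.takeWhile (fun d => d != c)).filter (sp l)

def SameData (u v : List ℕ) : Prop :=
  (∀ c, min (u.count c) 2 = min (v.count c) 2) ∧ SS u = SS v ∧
    ∀ c, 2 ≤ u.count c → sB u c = sB v c

lemma filter_sp_congr {l u w : List ℕ} (h : ∀ c ∈ l, u.count c = w.count c) :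
    l.filter (sp u) = l.filter (sp w) :=
  List.filter_congr fun c hc => by unfold sp; rw [h c hc]

lemma SameData.symm {u v : List ℕ} (h : SameData u v) : SameData v u :=
  ⟨fun c => (h.1 c).symm, h.2.1.symm,
    fun c hc => (h.2.2 c (by have := h.1 c; omega)).symm⟩

lemma SameData.trans {u v w : List ℕ} (h : SameData u v) (h' : SameData v w) :
    SameData u w :=
  ⟨fun c => (h.1 c).trans (h'.1 c), h.2.1.trans h'.2.1,
    fun c hc => (h.2.2 c hc).trans (h'.2.2 c (by have := h.1 c; omega))⟩

lemma pre_cons_ne {a c : ℕ} (h : ¬ a = c) (u : List ℕ) :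
    (a :: u).takeWhile (fun d => d != c) = a :: u.takeWhile (fun d => d != c) := by
  rw [List.takeWhile_cons, if_pos (by simp [h])]

lemma sp_cons_self {a : ℕ} {u : List ℕ} (h : a ∉ u) : sp (a :: u) a = true := by
  unfold sp
  simp [List.count_cons, List.count_eq_zero.mpr h]

lemma count_cons_ne {a c : ℕ} (h : ¬ a = c) (u : List ℕ) :
    (a :: u).count c = u.count c := by
  simp [List.count_cons, h]

lemma SS_cons_simple {a : ℕ} {u : List ℕ} (h : a ∉ u) : SS (a :: u) = a :: SS u := by
  unfold SS
  rw [List.filter_cons, if_pos (sp_cons_self h)]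
  congr 1
  exact filter_sp_congr (fun c hc =>
    count_cons_ne (fun he => h (by rw [he]; exact hc)) u)

lemma sp_cons_cons_self (a : ℕ) (u : List ℕ) : sp (a :: a :: u) a = false := by
  unfold sp
  simp [List.count_cons]

lemma SS_cons_double {a : ℕ} {u : List ℕ} : SS (a :: a :: u) = u.filter (sp u) ∨ True := Or.inr trivial

lemma SS_cons_double' {a : ℕ} {u : List ℕ} (h : a ∉ u) : SS (a :: a :: u) = SS u := by
  unfold SS
  rw [List.filter_cons, List.filter_cons, if_neg (by rw [sp_cons_cons_self]; simp),
    if_neg (by rw [sp_cons_cons_self]; simp)]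
  exact filter_sp_congr (fun c hc => by
    have : ¬ a = c := fun he => h (he ▸ hc)
    simp [List.count_cons, this])

lemma peel_simple {a : ℕ} {u v : List ℕ} (hu : a ∉ u) (hv : a ∉ v)
    (h : SameData (a :: u) (a :: v)) : SameData u v := by
  obtain ⟨hC, hA, hB⟩ := h
  refine ⟨?_, ?_, ?_⟩
  · intro c
    by_cases hc : c = a
    · subst hc
      rw [List.count_eq_zero.mpr hu, List.count_eq_zero.mpr hv]
    · have h1 := hC c
      rwa [count_cons_ne (fun he => hc he.symm) u,
        count_cons_ne (fun he => hc he.symm) v] at h1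
  · rw [SS_cons_simple hu, SS_cons_simple hv] at hA
    simpa using hA
  · intro c hc
    have hca : ¬ a = c := fun he => by
      subst he
      rw [List.count_eq_zero.mpr hu] at hc
      omega
    have hc' : 2 ≤ (a :: u).count c := by rwa [count_cons_ne hca]
    have hB' := hB c hc'
    unfold sB at hB' ⊢
    rw [pre_cons_ne hca u, pre_cons_ne hca v, List.filter_cons, List.filter_cons,
      if_pos (sp_cons_self hu), if_pos (sp_cons_self hv)] at hB'
    have hB'' : (u.takeWhile (fun d => d != c)).filter (sp (a :: u))
        = (v.takeWhile (fun d => d != c)).filter (sp (a :: v)) := by simpa using hB'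
    have e1 : (u.takeWhile (fun d => d != c)).filter (sp (a :: u))
        = (u.takeWhile (fun d => d != c)).filter (sp u) :=
      filter_sp_congr (fun d hd => by
        have hdu : d ∈ u := (List.takeWhile_sublist _).subset hd
        exact count_cons_ne (fun he => hu (by rw [he]; exact hdu)) u)
    have e2 : (v.takeWhile (fun d => d != c)).filter (sp (a :: v))
        = (v.takeWhile (fun d => d != c)).filter (sp v) :=
      filter_sp_congr (fun d hd => by
        have hdv : d ∈ v := (List.takeWhile_sublist _).subset hd
        exact count_cons_ne (fun he => hv (by rw [he]; exact hdv)) v)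
    rw [e1, e2] at hB''
    exact hB''

lemma peel_double {a : ℕ} {u v : List ℕ} (hu : a ∉ u) (hv : a ∉ v)
    (h : SameData (a :: a :: u) (a :: a :: v)) : SameData u v := by
  obtain ⟨hC, hA, hB⟩ := h
  have hcu : ∀ c, ¬ a = c → (a :: a :: u).count c = u.count c := fun c hc => by
    simp [List.count_cons, hc]
  have hcv : ∀ c, ¬ a = c → (a :: a :: v).count c = v.count c := fun c hc => by
    simp [List.count_cons, hc]
  refine ⟨?_, ?_, ?_⟩
  · intro c
    by_cases hc : a = c
    · subst hc
      rw [List.count_eq_zero.mpr hu, List.count_eq_zero.mpr hv]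
    · have h1 := hC c
      rwa [hcu c hc, hcv c hc] at h1
  · rwa [SS_cons_double' hu, SS_cons_double' hv] at hA
  · intro c hc
    have hca : ¬ a = c := fun he => by
      subst he
      rw [List.count_eq_zero.mpr hu] at hc
      omega
    have hc' : 2 ≤ (a :: a :: u).count c := by rwa [hcu c hca]
    have hB' := hB c hc'
    unfold sB at hB' ⊢
    rw [pre_cons_ne hca (a :: u), pre_cons_ne hca (a :: v), pre_cons_ne hca u,
      pre_cons_ne hca v,
      List.filter_cons, List.filter_cons, List.filter_cons, List.filter_cons,
      if_neg (by rw [sp_cons_cons_self]; simp), if_neg (by rw [sp_cons_cons_self]; simp),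
      if_neg (by rw [sp_cons_cons_self]; simp), if_neg (by rw [sp_cons_cons_self]; simp)] at hB'
    have e1 : (u.takeWhile (fun d => d != c)).filter (sp (a :: a :: u))
        = (u.takeWhile (fun d => d != c)).filter (sp u) :=
      filter_sp_congr (fun d hd => by
        have hdu : d ∈ u := (List.takeWhile_sublist _).subset hd
        exact hcu d (fun he => hu (by rw [he]; exact hdu)))
    have e2 : (v.takeWhile (fun d => d != c)).filter (sp (a :: a :: v))
        = (v.takeWhile (fun d => d != c)).filter (sp v) :=
      filter_sp_congr (fun d hd => by
        have hdv : d ∈ v := (List.takeWhile_sublist _).subset hd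
        exact hcv d (fun he => hv (by rw [he]; exact hdv)))
    rw [e1, e2] at hB'
    exact hB'

lemma bubble_data {l : List ℕ} {b : ℕ} (hcb : 2 ≤ l.count b)
    (hns : ∀ c ∈ l.takeWhile (fun d => d != b), l.count c ≠ 1) :
    SameData l (b :: b :: l.filter (fun d => d != b)) := by
  have hcnt : ∀ c, (b :: b :: l.filter (fun d => d != b)).count c
      = if c = b then 2 else l.count c := by
    intro c
    by_cases hc : c = b
    · subst hc
      simp [List.count_cons, count_filter_ne]
    · have hbc : ¬ b = c := fun he => hc he.symm
      simp [List.count_cons, count_filter_ne, hc, hbc]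
  have hspb : sp l b = false := by
    unfold sp
    simp
    omega
  refine ⟨?_, ?_, ?_⟩
  · intro c
    rw [hcnt c]
    split
    · next hcb' => subst hcb'; omega
    · rfl
  · show SS l = SS (b :: b :: l.filter (fun d => d != b))
    unfold SS
    rw [List.filter_cons, List.filter_cons,
      if_neg (by rw [show sp (b :: b :: l.filter (fun d => d != b)) b = false from by
        unfold sp; rw [hcnt b]; simp]; simp),
      if_neg (by rw [show sp (b :: b :: l.filter (fun d => d != b)) b = false from by
        unfold sp; rw [hcnt b]; simp]; simp)]
    have e1 : (l.filter (fun d => d != b)).filter (sp (b :: b :: l.filter (fun d => d != b)))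
        = (l.filter (fun d => d != b)).filter (sp l) :=
      filter_sp_congr (fun d hd => by
        have : (d != b) = true := (List.mem_filter.mp hd).2
        rw [hcnt d, if_neg (by simpa using this)])
    rw [e1, List.filter_filter]
    refine (List.filter_congr (fun d _ => ?_)).symm
    by_cases hdb : d = b
    · subst hdb
      rw [hspb]
      simp
    · simp [hdb]
  · intro c hc
    by_cases hcb' : c = b
    · subst hcb'
      have h1 : sB l c = [] := by
        unfold sB
        exact List.filter_eq_nil_iff.mpr (fun d hd => by
          have := hns d hd
          unfold sp
          simpa using this)
      have h2 : sB (c :: c :: l.filter (fun d => d != c)) c = [] := by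
        unfold sB
        rw [List.takeWhile_cons, if_neg (by simp)]
        rfl
      rw [h1, h2]
    · unfold sB
      rw [pre_cons_ne (show ¬ b = c from fun he => hcb' he.symm) _,
        pre_cons_ne (show ¬ b = c from fun he => hcb' he.symm) _,
        takeWhile_filter_comm _ c (by simp [hcb']) l,
        List.filter_cons, List.filter_cons,
        if_neg (by rw [show sp (b :: b :: l.filter (fun d => d != b)) b = false from by
          unfold sp; rw [hcnt b]; simp]; simp),
        if_neg (by rw [show sp (b :: b :: l.filter (fun d => d != b)) b = false from by
          unfold sp; rw [hcnt b]; simp]; simp)]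
      have e1 : ((l.takeWhile (fun d => d != c)).filter (fun d => d != b)).filter
            (sp (b :: b :: l.filter (fun d => d != b)))
          = ((l.takeWhile (fun d => d != c)).filter (fun d => d != b)).filter (sp l) :=
        filter_sp_congr (fun d hd => by
          have : (d != b) = true := (List.mem_filter.mp hd).2
          rw [hcnt d, if_neg (by simpa using this)])
      rw [e1, List.filter_filter]
      refine List.filter_congr (fun d _ => ?_)
      by_cases hdb : d = b
      · subst hdb
        rw [hspb]
        simp
      · simp [hdb]

/-! ### Completeness: same data implies θE-equivalence -/

lemma nil_of_sameData {u v : List ℕ} (h : SameData u v) (hu : u = []) : v = [] := by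
  subst hu
  rw [List.eq_nil_iff_forall_not_mem]
  intro c hc
  have h1 := h.1 c
  simp at h1
  have h2 := List.count_pos_iff.mpr hc
  omega

lemma main_complete (N : ℕ) : ∀ u v : List ℕ, u.length + v.length ≤ N →
    SameData u v → RE u v := by
  induction N with
  | zero =>
    intro u v hlen hsd
    have hu : u = [] := List.eq_nil_of_length_eq_zero (by omega)
    have hv := nil_of_sameData hsd hu
    subst hu; subst hv
    exact θE.refl _
  | succ N ih =>
    intro u v hlen hsd
    cases u with
    | nil =>
      have hv := nil_of_sameData hsd rfl
      subst hv
      exact θE.refl _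
    | cons a u1 =>
      cases v with
      | nil =>
        have := nil_of_sameData hsd.symm rfl
        simp at this
      | cons b v1 =>
        by_cases hau : a ∈ u1
        case neg =>
          by_cases hbv : b ∈ v1
          case neg =>
            have hA := hsd.2.1
            rw [SS_cons_simple hau, SS_cons_simple hbv, List.cons.injEq] at hA
            obtain ⟨rfl, hA2⟩ := hA
            have hsd' := peel_simple hau hbv hsd
            have hlen' : u1.length + v1.length ≤ N := by simp at hlen; omega
            exact RE_cons a (ih u1 v1 hlen' hsd')
          case pos =>
            exfalso
            have hvb : 2 ≤ (b :: v1).count b := by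
              have := List.count_pos_iff.mpr hbv
              rw [List.count_cons_self]
              omega
            have hub : 2 ≤ (a :: u1).count b := by have := hsd.1 b; omega
            have hBb := hsd.2.2 b hub
            have hsbv : sB (b :: v1) b = [] := by
              unfold sB
              rw [List.takeWhile_cons, if_neg (by simp)]
              rfl
            have hab : ¬ a = b := fun he => by
              subst he
              have : (a :: u1).count a = 1 := by
                simp [List.count_cons, List.count_eq_zero.mpr hau]
              omega
            have hmem : a ∈ sB (a :: u1) b := by
              unfold sB
              rw [pre_cons_ne hab u1, List.filter_cons, if_pos (sp_cons_self hau)]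
              exact List.mem_cons_self
            rw [hBb, hsbv] at hmem
            cases hmem
        case pos =>
          by_cases hbv : b ∈ v1
          case neg =>
            exfalso
            have hua : 2 ≤ (a :: u1).count a := by
              have := List.count_pos_iff.mpr hau
              rw [List.count_cons_self]
              omega
            have hBa := hsd.2.2 a hua
            have hsbu : sB (a :: u1) a = [] := by
              unfold sB
              rw [List.takeWhile_cons, if_neg (by simp)]
              rfl
            have hva : 2 ≤ (b :: v1).count a := by have := hsd.1 a; omega
            have hba : ¬ b = a := fun he => by
              subst he
              have : (b :: v1).count b = 1 := by
                simp [List.count_cons, List.count_eq_zero.mpr hbv]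
              omega
            have hmem : b ∈ sB (b :: v1) a := by
              unfold sB
              rw [pre_cons_ne hba v1, List.filter_cons, if_pos (sp_cons_self hbv)]
              exact List.mem_cons_self
            rw [← hBa, hsbu] at hmem
            cases hmem
          case pos =>
            have hua : 2 ≤ (a :: u1).count a := by
              have := List.count_pos_iff.mpr hau
              rw [List.count_cons_self]
              omega
            have hvb : 2 ≤ (b :: v1).count b := by
              have := List.count_pos_iff.mpr hbv
              rw [List.count_cons_self]
              omega
            have hnsv : ∀ c ∈ (b :: v1).takeWhile (fun d => d != b), (b :: v1).count c ≠ 1 := by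
              intro c hc
              rw [List.takeWhile_cons, if_neg (by simp)] at hc
              cases hc
            have hdvv := bubble_data hvb hnsv
            have hfv : (b :: v1).filter (fun d => d != b) = v1.filter (fun d => d != b) := by
              rw [List.filter_cons, if_neg (by simp)]
            rw [hfv] at hdvv
            have hgv : RE (b :: v1) (b :: b :: v1.filter (fun d => d != b)) := gather2 hbv
            have hlv : (v1.filter (fun d => d != b)).length < v1.length :=
              length_filter_ne_lt hbv
            by_cases hab : a = b
            · subst hab
              have hnsu : ∀ c ∈ (a :: u1).takeWhile (fun d => d != a),
                  (a :: u1).count c ≠ 1 := by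
                intro c hc
                rw [List.takeWhile_cons, if_neg (by simp)] at hc
                cases hc
              have hduu := bubble_data hua hnsu
              have hfu : (a :: u1).filter (fun d => d != a) = u1.filter (fun d => d != a) := by
                rw [List.filter_cons, if_neg (by simp)]
              rw [hfu] at hduu
              have hgu : RE (a :: u1) (a :: a :: u1.filter (fun d => d != a)) := gather2 hau
              have hlu : (u1.filter (fun d => d != a)).length < u1.length :=
                length_filter_ne_lt hau
              have hsd2 : SameData (a :: a :: u1.filter (fun d => d != a))
                  (a :: a :: v1.filter (fun d => d != a)) :=
                (hduu.symm.trans hsd).trans hdvv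
              have hsd3 := peel_double (by simp) (by simp) hsd2
              have hlen' : (u1.filter (fun d => d != a)).length
                  + (v1.filter (fun d => d != a)).length ≤ N := by
                simp at hlen
                omega
              exact θE.trans hgu
                (θE.trans (RE_cons a (RE_cons a (ih _ _ hlen' hsd3))) (θE.symm hgv))
            · have hub : 2 ≤ (a :: u1).count b := by have := hsd.1 b; omega
              have hBb := hsd.2.2 b hub
              have hsbv : sB (b :: v1) b = [] := by
                unfold sB
                rw [List.takeWhile_cons, if_neg (by simp)]
                rfl
              have hnsub : ∀ c ∈ (a :: u1).takeWhile (fun d => d != b),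
                  (a :: u1).count c ≠ 1 := by
                intro c hc hc1
                have hcs : sp (a :: u1) c = true := by unfold sp; simp [hc1]
                have hm : c ∈ sB (a :: u1) b := List.mem_filter.mpr ⟨hc, hcs⟩
                rw [hBb, hsbv] at hm
                cases hm
              have hbubR : RE (a :: u1) (b :: b :: (a :: u1).filter (fun d => d != b)) :=
                bubble (a :: u1).length (a :: u1) b le_rfl hub hnsub
              have hbubD := bubble_data hub hnsub
              have hsd2 : SameData (b :: b :: (a :: u1).filter (fun d => d != b))
                  (b :: b :: v1.filter (fun d => d != b)) :=
                (hbubD.symm.trans hsd).trans hdvv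
              have hsd3 := peel_double (by simp) (by simp) hsd2
              have hlen' : ((a :: u1).filter (fun d => d != b)).length
                  + (v1.filter (fun d => d != b)).length ≤ N := by
                have h1 : ((a :: u1).filter (fun d => d != b)).length < (a :: u1).length :=
                  length_filter_ne_lt (List.count_pos_iff.mp (by omega))
                simp at hlen h1 ⊢
                omega
              exact θE.trans hbubR
                (θE.trans (RE_cons b (RE_cons b (ih _ _ hlen' hsd3))) (θE.symm hgv))

/-! ### Projections and order extraction -/

def proj2 (c d : ℕ) : FM →* FM :=
  FreeMonoid.lift (fun i => if i = c then xL else if i = d then yL else 1)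

lemma proj2_of_c (c d : ℕ) : proj2 c d (FreeMonoid.of c) = xL := by
  simp [proj2, FreeMonoid.lift_eval_of]

lemma proj2_of_d {c d : ℕ} (h : c ≠ d) : proj2 c d (FreeMonoid.of d) = yL := by
  simp [proj2, FreeMonoid.lift_eval_of, Ne.symm h]

lemma proj2_ones (c d : ℕ) {l : List ℕ} (h : ∀ z ∈ l, z ≠ c ∧ z ≠ d) :
    proj2 c d (FreeMonoid.ofList l) = 1 := by
  induction l with
  | nil => exact map_one _
  | cons z l ih =>
    rw [FreeMonoid.ofList_cons, map_mul, ih (fun z hz => h z (List.mem_cons_of_mem _ hz))]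
    have hz := h z (List.mem_cons_self)
    simp [proj2, FreeMonoid.lift_eval_of, hz.1, hz.2]

lemma proj2_pow {c d : ℕ} (hcd : c ≠ d) {l : List ℕ} (h : d ∉ l) :
    proj2 c d (FreeMonoid.ofList l) = xL ^ (l.count c) := by
  induction l with
  | nil => simp
  | cons z l ih =>
    rw [FreeMonoid.ofList_cons, map_mul, ih (fun hz => h (List.mem_cons_of_mem _ hz))]
    by_cases hz : z = c
    · subst hz
      rw [proj2_of_c, List.count_cons_self, pow_succ']
    · have hzd : z ≠ d := fun he => h (by rw [← he]; exact List.mem_cons_self)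
      rw [count_cons_ne hz]
      simp [proj2, FreeMonoid.lift_eval_of, hz, hzd]

lemma dropWhile_first (t : ℕ) : ∀ l : List ℕ, t ∈ l →
    l.dropWhile (fun d => d != t) = t :: (l.dropWhile (fun d => d != t)).tail := by
  intro l
  induction l with
  | nil => intro h; cases h
  | cons x xs ih =>
    intro h
    by_cases hx : x = t
    · subst hx
      rw [List.dropWhile_cons, if_neg (by simp)]
      rfl
    · rw [List.dropWhile_cons, if_pos (by simp [hx])]
      rcases List.mem_cons.mp h with rfl | h'
      · exact absurd rfl hx
      · exact ih h'

lemma split_at_first {t : ℕ} {l : List ℕ} (h : t ∈ l) :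
    l = l.takeWhile (fun d => d != t) ++ t :: (l.dropWhile (fun d => d != t)).tail := by
  conv_lhs => rw [← List.takeWhile_append_dropWhile (p := fun d => d != t) (l := l)]
  rw [← dropWhile_first t l h]

lemma not_mem_takeWhile_ne_self (t : ℕ) (l : List ℕ) :
    t ∉ l.takeWhile (fun d => d != t) := fun h => by
  have := List.mem_takeWhile_imp h
  simp at this

lemma proj2_split {c t : ℕ} (hct : c ≠ t) {l : List ℕ} (ht : l.count t = 1) :
    proj2 c t (FreeMonoid.ofList l)
      = xL ^ ((l.takeWhile (fun d => d != t)).count c) * yL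
        * xL ^ ((l.dropWhile (fun d => d != t)).tail.count c) := by
  have hmem : t ∈ l := List.count_pos_iff.mp (by omega)
  have hsplit := split_at_first hmem
  set A := l.takeWhile (fun d => d != t) with hA
  set B := (l.dropWhile (fun d => d != t)).tail with hB
  have htA : t ∉ A := not_mem_takeWhile_ne_self t l
  have htB : t ∉ B := by
    intro htB
    have h1 : 1 ≤ A.count t + (1 + B.count t) := by
      have := List.count_pos_iff.mpr htB
      omega
    have h2 : l.count t = A.count t + (1 + B.count t) := by
      conv_lhs => rw [hsplit]
      simp [List.count_append, List.count_cons]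
      omega
    have := List.count_pos_iff.mpr htB
    omega
  conv_lhs => rw [hsplit]
  rw [FreeMonoid.ofList_append, FreeMonoid.ofList_cons, map_mul, map_mul,
    proj2_pow hct htA, proj2_pow hct htB, proj2_of_d hct, mul_assoc]

lemma first_before {c t : ℕ} (hct : c ≠ t) : ∀ l : List ℕ, c ∈ l → t ∈ l →
    t ∉ l.takeWhile (fun d => d != c) → c ∈ l.takeWhile (fun d => d != t) := by
  intro l
  induction l with
  | nil => intro h; cases h
  | cons x xs ih =>
    intro hc ht htn
    by_cases hx : x = c
    · subst hx
      rw [List.takeWhile_cons, if_pos (by simp [hct])]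
      exact List.mem_cons_self
    · have hxt : x ≠ t := by
        rintro rfl
        apply htn
        rw [List.takeWhile_cons, if_pos (by simp [hx])]
        exact List.mem_cons_self
      have hc' : c ∈ xs := by
        rcases List.mem_cons.mp hc with rfl | h; · exact absurd rfl hx
        · exact h
      have ht' : t ∈ xs := by
        rcases List.mem_cons.mp ht with rfl | h; · exact absurd rfl (Ne.symm hxt)
        · exact h
      have htn' : t ∉ xs.takeWhile (fun d => d != c) := by
        intro hmem
        apply htn
        rw [List.takeWhile_cons, if_pos (by simp [hx])]
        exact List.mem_cons_of_mem _ hmem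
      rw [List.takeWhile_cons, if_pos (by simp [hxt])]
      exact List.mem_cons_of_mem _ (ih hc' ht' htn')

lemma no_c_before {c t : ℕ} : ∀ l : List ℕ, t ∈ l.takeWhile (fun d => d != c) →
    (l.takeWhile (fun d => d != t)).count c = 0 := by
  intro l
  induction l with
  | nil => intro h; cases h
  | cons x xs ih =>
    intro h
    by_cases hxc : x = c
    · rw [List.takeWhile_cons, if_neg (by simp [hxc])] at h
      cases h
    · rw [List.takeWhile_cons, if_pos (by simp [hxc])] at h
      rcases List.mem_cons.mp h with rfl | h'
      · rw [List.takeWhile_cons, if_neg (by simp)]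
        rfl
      · by_cases hxt : x = t
        · rw [List.takeWhile_cons, if_neg (by simp [hxt])]
          rfl
        · rw [List.takeWhile_cons, if_pos (by simp [hxt]), count_cons_ne hxc]
          exact ih h'

lemma sublist_pair_split {c d : ℕ} {l : List ℕ} (h : [c, d].Sublist l) :
    ∃ l1 l2 l3, l = l1 ++ c :: (l2 ++ d :: l3) := by
  induction l with
  | nil => cases h
  | cons x xs ih =>
    cases h with
    | cons _ h' =>
      obtain ⟨l1, l2, l3, rfl⟩ := ih h'
      exact ⟨x :: l1, l2, l3, rfl⟩
    | cons_cons _ h' =>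
      obtain ⟨s, t, rfl⟩ := List.append_of_mem (List.singleton_sublist.mp h')
      exact ⟨[], s, t, rfl⟩

lemma exists_order_swap : ∀ (l1 l2 : List ℕ), (∀ c, c ∈ l1 ↔ c ∈ l2) → l1.Nodup → l2.Nodup →
    l1 ≠ l2 → ∃ c d, [c, d].Sublist l1 ∧ [d, c].Sublist l2 := by
  intro l1
  induction l1 with
  | nil =>
    intro l2 hm _ _ hne
    exact absurd (List.eq_nil_iff_forall_not_mem.mpr
      (fun c hc => by cases (hm c).mpr hc)).symm hne
  | cons x t1 ih =>
    intro l2 hm hn1 hn2 hne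
    have hx2 : x ∈ l2 := (hm x).mp (List.mem_cons_self)
    cases l2 with
    | nil => cases hx2
    | cons y t2 =>
      by_cases hxy : x = y
      · subst hxy
        have hmem : ∀ c, c ∈ t1 ↔ c ∈ t2 := by
          intro c
          constructor
          · intro hc
            rcases List.mem_cons.mp ((hm c).mp (List.mem_cons_of_mem _ hc)) with rfl | h
            · exact absurd hc (List.nodup_cons.mp hn1).1
            · exact h
          · intro hc
            rcases List.mem_cons.mp ((hm c).mpr (List.mem_cons_of_mem _ hc)) with rfl | h
            · exact absurd hc (List.nodup_cons.mp hn2).1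
            · exact h
        have hne' : t1 ≠ t2 := fun he => hne (by rw [he])
        obtain ⟨c, d, h1, h2⟩ := ih t2 hmem (List.nodup_cons.mp hn1).2
          (List.nodup_cons.mp hn2).2 hne'
        exact ⟨c, d, h1.cons x, h2.cons x⟩
      · have hy1 : y ∈ t1 := by
          rcases List.mem_cons.mp ((hm y).mpr (List.mem_cons_self)) with rfl | h
          · exact absurd rfl (Ne.symm hxy)
          · exact h
        have hx2' : x ∈ t2 := by
          rcases List.mem_cons.mp hx2 with h | h
          · exact absurd h hxy
          · exact h
        exact ⟨x, y, (List.singleton_sublist.mpr hy1).cons₂ x,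
          (List.singleton_sublist.mpr hx2').cons₂ y⟩

lemma mem_SS_iff {l : List ℕ} {c : ℕ} : c ∈ SS l ↔ l.count c = 1 := by
  unfold SS
  rw [List.mem_filter]
  constructor
  · intro h
    have := h.2
    unfold sp at this
    simpa using this
  · intro h
    exact ⟨List.count_pos_iff.mp (by omega), by unfold sp; simp [h]⟩

lemma SS_nodup (l : List ℕ) : (SS l).Nodup := by
  rw [List.nodup_iff_count_le_one]
  intro a
  by_cases h : a ∈ SS l
  · have h1 : l.count a = 1 := mem_SS_iff.mp h
    have h2 : (SS l).count a ≤ l.count a := (List.filter_sublist (l := l)).count_le a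
    omega
  · rw [List.count_eq_zero.mpr h]
    omega

lemma sB_prefix (l : List ℕ) (c : ℕ) : (sB l c) <+: SS l :=
  ⟨(l.dropWhile (fun d => d != c)).filter (sp l), by
    unfold sB SS
    rw [← List.filter_append, List.takeWhile_append_dropWhile]⟩

/-! ### Deriving the conclusion inside θ -/

lemma pow_stab (θ : Con FM) (n : ℕ) (hpow : θ (xL ^ n) (xL ^ (n + 1))) :
    ∀ m, n ≤ m → θ (xL ^ m) (xL ^ n) := by
  have step : ∀ j, θ (xL ^ n) (xL ^ (n + j)) := by
    intro j
    induction j with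
    | zero => exact θ.refl _
    | succ j ih =>
      refine θ.trans ih ?_
      have h1 : θ (xL ^ j * xL ^ n) (xL ^ j * xL ^ (n + 1)) := θ.mul (θ.refl _) hpow
      have e1 : xL ^ (n + j) = xL ^ j * xL ^ n := by rw [← pow_add]; ring_nf
      have e2 : xL ^ (n + (j + 1)) = xL ^ j * xL ^ (n + 1) := by rw [← pow_add]; ring_nf
      rw [e1, e2]
      exact h1
  intro m hm
  have h := step (m - n)
  rw [show n + (m - n) = m by omega] at h
  exact θ.symm h

lemma comm_finish (θ : Con FM) (n : ℕ) (hpow : θ (xL ^ n) (xL ^ (n + 1)))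
    (hcomm : θ (xL * yL) (yL * xL)) :
    θ (xL ^ n * yL * xL ^ n) (yL * xL ^ n) := by
  have hpc : ∀ k, θ (xL ^ k * yL) (yL * xL ^ k) := by
    intro k
    induction k with
    | zero => simpa using θ.refl yL
    | succ k ih =>
      have h1 : θ (xL ^ k * yL * xL) (yL * xL ^ k * xL) := θ.mul ih (θ.refl xL)
      have h2 : θ (xL ^ k * (xL * yL)) (xL ^ k * (yL * xL)) := θ.mul (θ.refl _) hcomm
      have e1 : xL ^ (k + 1) * yL = xL ^ k * (xL * yL) := by rw [pow_succ, mul_assoc]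
      have e2 : xL ^ k * (yL * xL) = xL ^ k * yL * xL := (mul_assoc _ _ _).symm
      have e3 : yL * xL ^ k * xL = yL * xL ^ (k + 1) := by rw [mul_assoc, ← pow_succ]
      rw [e1]
      refine θ.trans h2 ?_
      rw [e2, ← e3]
      exact h1
  have h1 := θ.mul (hpc n) (θ.refl (xL ^ n))
  refine θ.trans h1 ?_
  have h2 : θ (yL * (xL ^ n * xL ^ n)) (yL * xL ^ n) := by
    refine θ.mul (θ.refl _) ?_
    rw [← pow_add]
    exact pow_stab θ n hpow (n + n) (by omega)
  rw [mul_assoc]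
  exact h2

lemma finish_ident (θ : Con FM) (hθ : IsFullyInvariant θ) (n : ℕ) (hn : 1 ≤ n)
    (hpow : θ (xL ^ n) (xL ^ (n + 1))) (p q s : ℕ) (hp : 1 ≤ p) (hs : 1 ≤ s)
    (hid : θ (xL ^ p * yL * xL ^ q) (yL * xL ^ s)) :
    θ (xL ^ n * yL * xL ^ n) (yL * xL ^ n) := by
  have hle : ∀ r, 1 ≤ r → n ≤ n * r := fun r hr => by
    calc n = n * 1 := (mul_one n).symm
    _ ≤ n * r := Nat.mul_le_mul_left n hr
  have hst := pow_stab θ n hpow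
  set τ : FM →* FM := FreeMonoid.lift (fun i => if i = 0 then xL ^ n else FreeMonoid.of i)
    with hτdef
  have hτ := hθ τ _ _ hid
  have hτx : τ xL = xL ^ n := by
    simp [hτdef, xL, FreeMonoid.lift_eval_of]
  have hτy : τ yL = yL := by
    simp [hτdef, yL, FreeMonoid.lift_eval_of]
  have eL : τ (xL ^ p * yL * xL ^ q) = xL ^ (n * p) * yL * xL ^ (n * q) := by
    rw [map_mul, map_mul, map_pow, map_pow, hτx, hτy, ← pow_mul, ← pow_mul]
  have eR : τ (yL * xL ^ s) = yL * xL ^ (n * s) := by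
    rw [map_mul, map_pow, hτx, hτy, ← pow_mul]
  rw [eL, eR] at hτ
  by_cases hq : q = 0
  · subst hq
    rw [Nat.mul_zero, pow_zero, mul_one] at hτ
    have h1 : θ (xL ^ n * yL) (yL * xL ^ n) := by
      have e1 : θ (xL ^ n * yL) (xL ^ (n * p) * yL) :=
        θ.mul (θ.symm (hst (n * p) (hle p hp))) (θ.refl _)
      have e2 : θ (yL * xL ^ (n * s)) (yL * xL ^ n) :=
        θ.mul (θ.refl _) (hst (n * s) (hle s hs))
      exact θ.trans e1 (θ.trans hτ e2)
    have h2 := θ.mul h1 (θ.refl (xL ^ n))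
    refine θ.trans h2 ?_
    rw [mul_assoc]
    refine θ.mul (θ.refl _) ?_
    rw [← pow_add]
    exact hst (n + n) (by omega)
  · have e1 : θ (xL ^ n * yL * xL ^ n) (xL ^ (n * p) * yL * xL ^ (n * q)) :=
      θ.mul (θ.mul (θ.symm (hst (n * p) (hle p hp))) (θ.refl _))
        (θ.symm (hst (n * q) (hle q (by omega))))
    have e2 : θ (yL * xL ^ (n * s)) (yL * xL ^ n) :=
      θ.mul (θ.refl _) (hst (n * s) (hle s hs))
    exact θ.trans e1 (θ.trans hτ e2)

lemma key_side (θ : Con FM) (hθ : IsFullyInvariant θ) (n : ℕ) (hn : 1 ≤ n)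
    (hpow : θ (xL ^ n) (xL ^ (n + 1))) (U V : FM) (hUV : θ U V) (c t : ℕ) (hct : c ≠ t)
    (hcU2 : 2 ≤ U.toList.count c) (hcV2 : 2 ≤ V.toList.count c)
    (htU : U.toList.count t = 1) (htV : V.toList.count t = 1)
    (htinU : t ∉ U.toList.takeWhile (fun d => d != c))
    (htinV : t ∈ V.toList.takeWhile (fun d => d != c)) :
    θ (xL ^ n * yL * xL ^ n) (yL * xL ^ n) := by
  have hid := hθ (proj2 c t) U V hUV
  have hU : U = FreeMonoid.ofList U.toList := rfl
  have hV : V = FreeMonoid.ofList V.toList := rfl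
  rw [hU, hV, proj2_split hct htU, proj2_split hct htV] at hid
  set p := (U.toList.takeWhile (fun d => d != t)).count c with hpdef
  set q := ((U.toList.dropWhile (fun d => d != t)).tail).count c with hqdef
  set s := ((V.toList.dropWhile (fun d => d != t)).tail).count c with hsdef
  have hp : 1 ≤ p := by
    have hcmem : c ∈ U.toList := List.count_pos_iff.mp (by omega)
    have htmem : t ∈ U.toList := List.count_pos_iff.mp (by omega)
    have := first_before hct U.toList hcmem htmem htinU
    have := List.count_pos_iff.mpr this
    omega
  have hV0 : (V.toList.takeWhile (fun d => d != t)).count c = 0 := no_c_before V.toList htinV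
  have hs : 1 ≤ s := by
    have htmem : t ∈ V.toList := List.count_pos_iff.mp (by omega)
    have hsplit := split_at_first htmem
    have hcount : V.toList.count c
        = (V.toList.takeWhile (fun d => d != t)).count c
          + (t :: (V.toList.dropWhile (fun d => d != t)).tail).count c := by
      conv_lhs => rw [hsplit]
      rw [List.count_append]
    rw [hV0, count_cons_ne (Ne.symm hct)] at hcount
    omega
  rw [hV0, pow_zero, one_mul] at hid
  exact finish_ident θ hθ n hn hpow p q s hp hs hid

lemma proj2_once {c d : ℕ} (hcd : c ≠ d) {l : List ℕ}
    (hc : l.count c = 1) (hd : l.count d = 1) (hsub : [c, d].Sublist l) :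
    proj2 c d (FreeMonoid.ofList l) = xL * yL := by
  obtain ⟨l1, l2, l3, rfl⟩ := sublist_pair_split hsub
  have hdc : (d == c) = false := beq_eq_false_iff_ne.mpr (fun h => hcd h.symm)
  have hcd' : (c == d) = false := beq_eq_false_iff_ne.mpr hcd
  have e1 : (l1 ++ c :: (l2 ++ d :: l3)).count c
      = l1.count c + l2.count c + l3.count c + 1 := by
    simp [List.count_append, List.count_cons, hdc]
    omega
  have e2 : (l1 ++ c :: (l2 ++ d :: l3)).count d
      = l1.count d + l2.count d + l3.count d + 1 := by
    simp [List.count_append, List.count_cons, hcd']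
    omega
  rw [e1] at hc
  rw [e2] at hd
  have hz : ∀ (m : List ℕ), m.count c = 0 → m.count d = 0 → ∀ z ∈ m, z ≠ c ∧ z ≠ d := by
    intro m h1 h2 z hzm
    constructor
    · rintro rfl
      have := List.count_pos_iff.mpr hzm
      omega
    · rintro rfl
      have := List.count_pos_iff.mpr hzm
      omega
  rw [FreeMonoid.ofList_append, FreeMonoid.ofList_cons, FreeMonoid.ofList_append,
    FreeMonoid.ofList_cons, map_mul, map_mul, map_mul, map_mul,
    proj2_ones c d (hz l1 (by omega) (by omega)),
    proj2_ones c d (hz l2 (by omega) (by omega)),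
    proj2_ones c d (hz l3 (by omega) (by omega)),
    proj2_of_c, proj2_of_d hcd]
  simp

lemma proj2_once' {c d : ℕ} (hcd : c ≠ d) {l : List ℕ}
    (hc : l.count c = 1) (hd : l.count d = 1) (hsub : [d, c].Sublist l) :
    proj2 c d (FreeMonoid.ofList l) = yL * xL := by
  obtain ⟨l1, l2, l3, rfl⟩ := sublist_pair_split hsub
  have hdc : (d == c) = false := beq_eq_false_iff_ne.mpr (fun h => hcd h.symm)
  have hcd' : (c == d) = false := beq_eq_false_iff_ne.mpr hcd
  have e1 : (l1 ++ d :: (l2 ++ c :: l3)).count c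
      = l1.count c + l2.count c + l3.count c + 1 := by
    simp [List.count_append, List.count_cons, hdc]
    omega
  have e2 : (l1 ++ d :: (l2 ++ c :: l3)).count d
      = l1.count d + l2.count d + l3.count d + 1 := by
    simp [List.count_append, List.count_cons, hcd']
    omega
  rw [e1] at hc
  rw [e2] at hd
  have hz : ∀ (m : List ℕ), m.count c = 0 → m.count d = 0 → ∀ z ∈ m, z ≠ c ∧ z ≠ d := by
    intro m h1 h2 z hzm
    constructor
    · rintro rfl
      have := List.count_pos_iff.mpr hzm
      omega
    · rintro rfl
      have := List.count_pos_iff.mpr hzm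
      omega
  rw [FreeMonoid.ofList_append, FreeMonoid.ofList_cons, FreeMonoid.ofList_append,
    FreeMonoid.ofList_cons, map_mul, map_mul, map_mul, map_mul,
    proj2_ones c d (hz l1 (by omega) (by omega)),
    proj2_ones c d (hz l2 (by omega) (by omega)),
    proj2_ones c d (hz l3 (by omega) (by omega)),
    proj2_of_c, proj2_of_d hcd]
  simp

/-- **Lemma 2.13.** If a variety `V` satisfies `x^n ≈ x^{n+1}` with `n ≥ 2`, contains
`C₂` and does not contain `E`, then `V` satisfies `x^n y x^n ≈ y x^n`. -/
theorem lemma_2_13 (θ : Con FM) (hθ : IsFullyInvariant θ)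
    (n : ℕ) (hn : 2 ≤ n) (hpow : θ (xL ^ n) (xL ^ (n + 1)))
    (hC2 : θ ≤ θC2)
    (hE : ∃ u v : FM, θ u v ∧ ¬ θE u v) :
    θ (xL ^ n * yL * xL ^ n) (yL * xL ^ n) := by
  obtain ⟨u, v, huv, hnE⟩ := hE
  have hC : ∀ c, min (u.toList.count c) 2 = min (v.toList.count c) 2 :=
    fun c => θC2_count (hC2 huv) c
  have hn1 : 1 ≤ n := by omega
  have hnSD : ¬ SameData u.toList v.toList := by
    intro hsd
    exact hnE (main_complete (u.toList.length + v.toList.length) _ _ le_rfl hsd)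
  by_cases hA : SS u.toList = SS v.toList
  · have hB : ¬ ∀ c, 2 ≤ u.toList.count c → sB u.toList c = sB v.toList c :=
      fun h => hnSD ⟨hC, hA, h⟩
    push_neg at hB
    obtain ⟨c, hc2, hneq⟩ := hB
    have hcv2 : 2 ≤ v.toList.count c := by have := hC c; omega
    have hpu : sB u.toList c <+: SS v.toList := hA ▸ sB_prefix u.toList c
    have hpv : sB v.toList c <+: SS v.toList := sB_prefix v.toList c
    rcases List.prefix_or_prefix_of_prefix hpu hpv with hp | hp
    · obtain ⟨r, hr⟩ := hp
      cases r with
      | nil => rw [List.append_nil] at hr; exact absurd hr hneq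
      | cons t r' =>
        have htv : t ∈ sB v.toList c := by
          rw [← hr]
          exact List.mem_append_right _ (List.mem_cons_self)
        have hnd : (sB v.toList c).Nodup := (hpv.sublist).nodup (SS_nodup v.toList)
        have htu : t ∉ sB u.toList c := by
          rw [← hr] at hnd
          exact fun hmem => (List.nodup_append'.mp hnd).2.2 hmem (List.mem_cons_self)
        have htv' := List.mem_filter.mp htv
        have htvc : v.toList.count t = 1 := by
          have := htv'.2
          unfold sp at this
          simpa using this
        have htuc : u.toList.count t = 1 := by have := hC t; omega
        have hct : c ≠ t := fun he => by rw [he] at hc2; omega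
        have htinU : t ∉ u.toList.takeWhile (fun d => d != c) := by
          intro hmem
          exact htu (List.mem_filter.mpr ⟨hmem, by unfold sp; simp [htuc]⟩)
        exact key_side θ hθ n hn1 hpow u v huv c t hct hc2 hcv2 htuc htvc htinU htv'.1
    · obtain ⟨r, hr⟩ := hp
      cases r with
      | nil => rw [List.append_nil] at hr; exact absurd hr.symm hneq
      | cons t r' =>
        have htu : t ∈ sB u.toList c := by
          rw [← hr]
          exact List.mem_append_right _ (List.mem_cons_self)
        have hnd : (sB u.toList c).Nodup := (hpu.sublist).nodup (SS_nodup v.toList)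
        have htnv : t ∉ sB v.toList c := by
          rw [← hr] at hnd
          exact fun hmem => (List.nodup_append'.mp hnd).2.2 hmem (List.mem_cons_self)
        have htu' := List.mem_filter.mp htu
        have htuc : u.toList.count t = 1 := by
          have := htu'.2
          unfold sp at this
          simpa using this
        have htvc : v.toList.count t = 1 := by have := hC t; omega
        have hct : c ≠ t := fun he => by rw [he] at hc2; omega
        have htinV : t ∉ v.toList.takeWhile (fun d => d != c) := by
          intro hmem
          exact htnv (List.mem_filter.mpr ⟨hmem, by unfold sp; simp [htvc]⟩)
        exact key_side θ hθ n hn1 hpow v u (θ.symm huv) c t hct hcv2 hc2 htvc htuc htinV htu'.1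
  · have hmemiff : ∀ c, c ∈ SS u.toList ↔ c ∈ SS v.toList := by
      intro c
      rw [mem_SS_iff, mem_SS_iff]
      have := hC c
      omega
    obtain ⟨c, d, h1, h2⟩ := exists_order_swap _ _ hmemiff (SS_nodup _) (SS_nodup _) hA
    have hcd : c ≠ d := by
      have hnd : [c, d].Nodup := h1.nodup (SS_nodup u.toList)
      rcases List.nodup_cons.mp hnd with ⟨hcm, _⟩
      exact fun he => hcm (by simp [he])
    have hcin : c ∈ SS u.toList := h1.subset (by simp)
    have hdin : d ∈ SS u.toList := h1.subset (by simp)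
    have hcu : u.toList.count c = 1 := mem_SS_iff.mp hcin
    have hdu : u.toList.count d = 1 := mem_SS_iff.mp hdin
    have hcv : v.toList.count c = 1 := by have := hC c; omega
    have hdv : v.toList.count d = 1 := by have := hC d; omega
    have h1' : [c, d].Sublist u.toList := h1.trans List.filter_sublist
    have h2' : [d, c].Sublist v.toList := h2.trans List.filter_sublist
    have hcomm := hθ (proj2 c d) u v huv
    have e1 : proj2 c d u = xL * yL := proj2_once hcd hcu hdu h1'
    have e2 : proj2 c d v = yL * xL := proj2_once' hcd hcv hdv h2'
    rw [e1, e2] at hcomm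
    exact comm_finish θ n hpow hcomm
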